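/- Let Φ be a Young function and X a quasi-Banach function space over μ (i.e., a complete quasi-normed function space). Then the Orlicz space X^Φ equipped with the Luxemburg quasi-norm is complete. -/

import Mathlib

open MeasureTheory Filter Set

/-- A Young function: strictly increasing, continuous, convex on `[0,∞)`,
vanishing at `0` and tending to infinity. -/
structure IsYoung (Φ : ℝ → ℝ) : Prop where
  strictMono : StrictMonoOn Φ (Set.Ici 0)
  continuous : ContinuousOn Φ (Set.Ici 0)
  convex : ConvexOn ℝ (Set.Ici 0) Φ
  map_zero : Φ 0 = 0
  tendsto_atTop : Tendsto Φ atTop atTop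

/-- A quasi-normed function space over `μ` with quasi-triangle constant `K`:
an ideal of measurable functions (modulo a.e. equality) containing the
constant function `1`, equipped with a lattice quasi-norm. -/
structure QNFS {α : Type*} [MeasurableSpace α] (μ : Measure α) (K : ℝ) where
  mem : (α → ℝ) → Prop
  nrm : (α → ℝ) → ℝ
  one_le_K : 1 ≤ K
  nrm_nonneg : ∀ f, 0 ≤ nrm f
  nrm_eq_zero : ∀ f, mem f → (nrm f = 0 ↔ f =ᵐ[μ] 0)
  add_mem : ∀ f g, mem f → mem g → mem (f + g)
  smul_mem : ∀ (c : ℝ) (f), mem f → mem (c • f)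
  nrm_smul : ∀ (c : ℝ) (f), mem f → nrm (c • f) = |c| * nrm f
  nrm_add_le : ∀ f g, mem f → mem g → nrm (f + g) ≤ K * (nrm f + nrm g)
  ideal_mem : ∀ f g, mem g → (∀ᵐ x ∂μ, |f x| ≤ |g x|) → mem f
  ideal_nrm : ∀ f g, mem f → mem g → (∀ᵐ x ∂μ, |f x| ≤ |g x|) → nrm f ≤ nrm g
  const_one_mem : mem (fun _ => (1 : ℝ))

variable {α : Type*} [MeasurableSpace α]

/-- Membership in the Orlicz class `X̃^Φ`. -/
def memClass {μ : Measure α} {K : ℝ} (Φ : ℝ → ℝ) (X : QNFS μ K) (f : α → ℝ) : Prop :=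
  X.mem (fun x => Φ |f x|)

/-- Membership in the Orlicz space `X^Φ`. -/
def memOrlicz {μ : Measure α} {K : ℝ} (Φ : ℝ → ℝ) (X : QNFS μ K) (f : α → ℝ) : Prop :=
  ∃ c > 0, X.mem (fun x => Φ (|f x| / c))

/-- The Luxemburg quasi-norm on `X^Φ`. -/
noncomputable def lux {μ : Measure α} {K : ℝ} (Φ : ℝ → ℝ) (X : QNFS μ K) (f : α → ℝ) : ℝ :=
  sInf {k : ℝ | 0 < k ∧ X.mem (fun x => Φ (|f x| / k)) ∧
    X.nrm (fun x => Φ (|f x| / k)) ≤ 1}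

/-- Completeness of a quasi-normed function space: every Cauchy sequence
(w.r.t. the quasi-norm) converges to a member of the space. -/
def CompleteWrt (mem : (α → ℝ) → Prop) (N : (α → ℝ) → ℝ) : Prop :=
  ∀ f : ℕ → α → ℝ, (∀ n, mem (f n)) →
    (∀ ε : ℝ, 0 < ε → ∃ n₀, ∀ m ≥ n₀, ∀ n ≥ n₀, N (f m - f n) < ε) →
    ∃ g : α → ℝ, mem g ∧ Filter.Tendsto (fun n => N (f n - g)) Filter.atTop (nhds 0)

section Aux
variable {μ : Measure α} {K : ℝ}

namespace QNFS
variable (X : QNFS μ K)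
include X

lemma K_pos : (0:ℝ) < K := lt_of_lt_of_le one_pos X.one_le_K

lemma mem_zero : X.mem (0 : α → ℝ) := by
  have := X.smul_mem 0 _ X.const_one_mem
  rwa [zero_smul] at this

lemma nrm_zero : X.nrm (0 : α → ℝ) = 0 := by
  have := X.nrm_smul 0 _ X.const_one_mem
  rw [zero_smul] at this
  simpa using this

lemma mem_neg {f : α → ℝ} (hf : X.mem f) : X.mem (-f) := by
  have := X.smul_mem (-1) f hf
  rwa [neg_one_smul] at this

lemma nrm_neg {f : α → ℝ} (hf : X.mem f) : X.nrm (-f) = X.nrm f := by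
  have := X.nrm_smul (-1) f hf
  rw [neg_one_smul] at this
  simpa using this

lemma mem_sub {f g : α → ℝ} (hf : X.mem f) (hg : X.mem g) : X.mem (f - g) := by
  rw [sub_eq_add_neg]; exact X.add_mem _ _ hf (X.mem_neg hg)

lemma nrm_sub_comm {f g : α → ℝ} (hf : X.mem f) (hg : X.mem g) :
    X.nrm (f - g) = X.nrm (g - f) := by
  have h := X.nrm_neg (X.mem_sub hg hf)
  rwa [neg_sub] at h

end QNFS

namespace IsYoung
variable {Φ : ℝ → ℝ} (hΦ : IsYoung Φ)
include hΦ

lemma nonneg {t : ℝ} (ht : 0 ≤ t) : 0 ≤ Φ t := by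
  rcases eq_or_lt_of_le ht with h | h
  · rw [← h, hΦ.map_zero]
  · have := hΦ.strictMono (Set.mem_Ici.mpr le_rfl) (Set.mem_Ici.mpr ht) h
    rw [hΦ.map_zero] at this
    exact this.le

lemma mono {s t : ℝ} (hs : 0 ≤ s) (hst : s ≤ t) : Φ s ≤ Φ t :=
  hΦ.strictMono.monotoneOn (Set.mem_Ici.mpr hs) (Set.mem_Ici.mpr (hs.trans hst)) hst

lemma two_point {a b u v : ℝ} (ha : 0 ≤ a) (hb : 0 ≤ b) (hab : a + b = 1)
    (hu : 0 ≤ u) (hv : 0 ≤ v) : Φ (a*u + b*v) ≤ a * Φ u + b * Φ v := by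
  have := hΦ.convex.2 (Set.mem_Ici.mpr hu) (Set.mem_Ici.mpr hv) ha hb hab
  simpa [smul_eq_mul] using this

lemma scale {l t : ℝ} (hl0 : 0 ≤ l) (hl1 : l ≤ 1) (ht : 0 ≤ t) : Φ (l * t) ≤ l * Φ t := by
  have := hΦ.two_point hl0 (by linarith : (0:ℝ) ≤ 1 - l) (by ring) ht le_rfl
  simpa [hΦ.map_zero] using this

lemma young_sum : ∀ (m : ℕ) (s : ℕ → ℝ), (∀ i, 0 ≤ s i) →
    Φ (∑ i ∈ Finset.range m, s i) ≤
      ∑ i ∈ Finset.range m, (2:ℝ)⁻¹^(i+1) * Φ ((2:ℝ)^(i+1) * s i) := by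
  intro m
  induction m with
  | zero => intro s hs; simp [hΦ.map_zero]
  | succ m ih =>
    intro s hs
    rw [Finset.sum_range_succ' s m, Finset.sum_range_succ']
    set A := ∑ i ∈ Finset.range m, s (i+1) with hA
    have hA0 : 0 ≤ A := Finset.sum_nonneg fun i _ => hs _
    have h1 : Φ (A + s 0) ≤ 2⁻¹ * Φ (2*A) + 2⁻¹ * Φ (2*(s 0)) := by
      have := hΦ.two_point (a := (2:ℝ)⁻¹) (b := (2:ℝ)⁻¹) (u := 2*A) (v := 2*(s 0))
        (by norm_num) (by norm_num) (by norm_num) (by linarith) (by have := hs 0; linarith)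
      calc Φ (A + s 0) = Φ ((2:ℝ)⁻¹ * (2*A) + (2:ℝ)⁻¹ * (2*(s 0))) := by ring_nf
        _ ≤ _ := this
    have h2 : Φ (2*A) ≤ ∑ i ∈ Finset.range m, (2:ℝ)⁻¹^(i+1) * Φ ((2:ℝ)^(i+1) * (2 * s (i+1))) := by
      have := ih (fun i => 2 * s (i+1)) (fun i => by show (0:ℝ) ≤ 2 * s (i+1); have := hs (i+1); linarith)
      rwa [← Finset.mul_sum] at this
    have h3 : 2⁻¹ * Φ (2*A) ≤ ∑ i ∈ Finset.range m, (2:ℝ)⁻¹^(i+1+1) * Φ ((2:ℝ)^(i+1+1) * s (i+1)) := by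
      calc (2:ℝ)⁻¹ * Φ (2*A) ≤ 2⁻¹ * ∑ i ∈ Finset.range m, (2:ℝ)⁻¹^(i+1) * Φ ((2:ℝ)^(i+1) * (2 * s (i+1))) := by
            apply mul_le_mul_of_nonneg_left h2 (by norm_num)
        _ = ∑ i ∈ Finset.range m, (2:ℝ)⁻¹^(i+1+1) * Φ ((2:ℝ)^(i+1+1) * s (i+1)) := by
            rw [Finset.mul_sum]
            apply Finset.sum_congr rfl
            intro i _
            have e1 : (2:ℝ)^(i+1) * (2 * s (i+1)) = (2:ℝ)^(i+1+1) * s (i+1) := by ring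
            rw [e1]; ring
    calc Φ (A + s 0) ≤ 2⁻¹ * Φ (2*A) + 2⁻¹ * Φ (2*(s 0)) := h1
      _ ≤ (∑ i ∈ Finset.range m, (2:ℝ)⁻¹^(i+1+1) * Φ ((2:ℝ)^(i+1+1) * s (i+1)))
            + (2:ℝ)⁻¹^(0+1) * Φ ((2:ℝ)^(0+1) * s 0) := by
          apply add_le_add h3
          simp [pow_one]
      _ = _ := rfl

end IsYoung
end Aux

set_option linter.unusedSectionVars false
section Aux2
variable {μ : Measure α} {K : ℝ} {Φ : ℝ → ℝ}

/-- `k` is an admissible Luxemburg constant for `u`. -/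
def isLux (Φ : ℝ → ℝ) (X : QNFS μ K) (u : α → ℝ) (k : ℝ) : Prop :=
  0 < k ∧ X.mem (fun x => Φ (|u x| / k)) ∧ X.nrm (fun x => Φ (|u x| / k)) ≤ 1

lemma lux_nonneg (X : QNFS μ K) (u : α → ℝ) : 0 ≤ lux Φ X u :=
  Real.sInf_nonneg fun _ hy => hy.1.le

lemma lux_le_of_isLux {X : QNFS μ K} {u : α → ℝ} {k : ℝ} (h : isLux Φ X u k) :
    lux Φ X u ≤ k :=
  csInf_le ⟨0, fun _ hy => hy.1.le⟩ h

lemma exists_isLux_lt {X : QNFS μ K} {u : α → ℝ} {ε : ℝ}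
    (hne : ∃ k, isLux Φ X u k) (h : lux Φ X u < ε) : ∃ k, isLux Φ X u k ∧ k < ε := by
  obtain ⟨k, hk, hkε⟩ := exists_lt_of_csInf_lt (hne.imp fun k hk => hk) h
  exact ⟨k, hk, hkε⟩

variable (hΦ : IsYoung Φ)
include hΦ

/-- Scaling: makes the Luxemburg constant larger. -/
lemma lux_scale {X : QNFS μ K} (h : α → ℝ) {a k : ℝ} (ha : 0 < a) (hak : a ≤ k)
    (hm : X.mem (fun x => Φ (|h x| / a))) :
    X.mem (fun x => Φ (|h x| / k)) ∧
      X.nrm (fun x => Φ (|h x| / k)) ≤ (a / k) * X.nrm (fun x => Φ (|h x| / a)) := by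
  have hk : 0 < k := ha.trans_le hak
  set F : α → ℝ := fun x => Φ (|h x| / a) with hF
  have hpt : ∀ x, Φ (|h x| / k) ≤ (a/k) * F x := by
    intro x
    have e : |h x| / k = (a/k) * (|h x| / a) := by field_simp
    rw [e]
    exact hΦ.scale (by positivity) (by rw [div_le_one hk]; exact hak) (by positivity)
  have hmem' : X.mem ((a/k) • F) := X.smul_mem _ _ hm
  have hdom : ∀ᵐ x ∂μ, |Φ (|h x| / k)| ≤ |((a/k) • F) x| := by
    refine ae_of_all _ fun x => ?_
    have h1 : (0:ℝ) ≤ Φ (|h x| / k) := hΦ.nonneg (by positivity)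
    have h2 : (0:ℝ) ≤ (a/k) * F x := mul_nonneg (by positivity) (hΦ.nonneg (by positivity))
    rw [abs_of_nonneg h1, Pi.smul_apply, smul_eq_mul, abs_of_nonneg h2]
    exact hpt x
  have hmem : X.mem (fun x => Φ (|h x| / k)) := X.ideal_mem _ _ hmem' hdom
  refine ⟨hmem, ?_⟩
  have := X.ideal_nrm _ _ hmem hmem' hdom
  rwa [X.nrm_smul _ _ hm, abs_of_pos (by positivity)] at this

lemma exists_isLux_of_memOrlicz {X : QNFS μ K} {u : α → ℝ} (hu : memOrlicz Φ X u) :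
    ∃ k, isLux Φ X u k := by
  obtain ⟨c, hc, hm⟩ := hu
  set N := X.nrm (fun x => Φ (|u x| / c)) with hN
  have hN0 : 0 ≤ N := X.nrm_nonneg _
  have hck : c ≤ c * (N + 1) := le_mul_of_one_le_right hc.le (by linarith)
  obtain ⟨hmem, hnrm⟩ := lux_scale hΦ u hc hck hm
  refine ⟨c * (N+1), by positivity, hmem, hnrm.trans ?_⟩
  have e : c / (c * (N+1)) * N = N / (N+1) := by field_simp
  rw [← hN, e, div_le_one (by linarith)]
  linarith

/-- Quasi-triangle inequality for admissible constants. -/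
lemma isLux_add {X : QNFS μ K} {u v : α → ℝ} {a b : ℝ}
    (hu : isLux Φ X u a) (hv : isLux Φ X v b) :
    isLux Φ X (u + v) (K * (a + b)) := by
  obtain ⟨ha, hmu, hnu⟩ := hu
  obtain ⟨hb, hmv, hnv⟩ := hv
  have hK : (0:ℝ) < K := lt_of_lt_of_le one_pos X.one_le_K
  have hab : (0:ℝ) < a + b := by linarith
  set F : α → ℝ := fun x => Φ (|u x| / a) with hF
  set G : α → ℝ := fun x => Φ (|v x| / b) with hG
  set W : α → ℝ := K⁻¹ • ((a/(a+b)) • F + (b/(a+b)) • G) with hW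
  have hmemW : X.mem W := X.smul_mem _ _ (X.add_mem _ _ (X.smul_mem _ _ hmu) (X.smul_mem _ _ hmv))
  have hWx : ∀ x, W x = K⁻¹ * ((a/(a+b)) * F x + (b/(a+b)) * G x) := by
    intro x; simp [hW, smul_eq_mul, mul_add]
  have hpt : ∀ x, Φ (|(u+v) x| / (K*(a+b))) ≤ W x := by
    intro x
    have habs : |(u+v) x| ≤ |u x| + |v x| := by
      rw [Pi.add_apply]; exact abs_add_le _ _
    have s1 : Φ (|(u+v) x| / (K*(a+b))) ≤ Φ ((|u x| + |v x|) / (K*(a+b))) :=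
      hΦ.mono (by positivity) (by gcongr)
    have s2 : Φ ((|u x| + |v x|) / (K*(a+b))) ≤ K⁻¹ * Φ ((|u x| + |v x|) / (a+b)) := by
      have e : (|u x| + |v x|) / (K*(a+b)) = K⁻¹ * ((|u x| + |v x|) / (a+b)) := by field_simp
      rw [e]
      exact hΦ.scale (by positivity) (by rw [inv_le_one_iff₀]; right; exact X.one_le_K) (by positivity)
    have s3 : Φ ((|u x| + |v x|) / (a+b)) ≤ (a/(a+b)) * F x + (b/(a+b)) * G x := by
      have e : (|u x| + |v x|) / (a+b) = (a/(a+b)) * (|u x|/a) + (b/(a+b)) * (|v x|/b) := by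
        field_simp
      rw [e]
      exact hΦ.two_point (by positivity) (by positivity) (by field_simp) (by positivity) (by positivity)
    calc Φ (|(u+v) x| / (K*(a+b))) ≤ Φ ((|u x| + |v x|) / (K*(a+b))) := s1
      _ ≤ K⁻¹ * Φ ((|u x| + |v x|) / (a+b)) := s2
      _ ≤ K⁻¹ * ((a/(a+b)) * F x + (b/(a+b)) * G x) := by
          apply mul_le_mul_of_nonneg_left s3 (by positivity)
      _ = W x := (hWx x).symm
  have hW0 : ∀ x, 0 ≤ W x := by
    intro x
    rw [hWx x]
    have := hΦ.nonneg (show (0:ℝ) ≤ |u x|/a by positivity)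
    have := hΦ.nonneg (show (0:ℝ) ≤ |v x|/b by positivity)
    have : (0:ℝ) ≤ (a/(a+b)) * F x + (b/(a+b)) * G x := by
      apply add_nonneg <;> apply mul_nonneg (by positivity)
      · exact hΦ.nonneg (by positivity)
      · exact hΦ.nonneg (by positivity)
    positivity
  have hdom : ∀ᵐ x ∂μ, |Φ (|(u+v) x| / (K*(a+b)))| ≤ |W x| := by
    refine ae_of_all _ fun x => ?_
    rw [abs_of_nonneg (hΦ.nonneg (by positivity)), abs_of_nonneg (hW0 x)]
    exact hpt x
  have hmem : X.mem (fun x => Φ (|(u+v) x| / (K*(a+b)))) := X.ideal_mem _ _ hmemW hdom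
  refine ⟨by positivity, hmem, ?_⟩
  have h1 : X.nrm _ ≤ X.nrm W := X.ideal_nrm _ _ hmem hmemW hdom
  have h2 : X.nrm W ≤ 1 := by
    have hmFa : X.mem ((a/(a+b)) • F) := X.smul_mem _ _ hmu
    have hmGb : X.mem ((b/(a+b)) • G) := X.smul_mem _ _ hmv
    have e1 : X.nrm W = K⁻¹ * X.nrm ((a/(a+b)) • F + (b/(a+b)) • G) := by
      rw [hW, X.nrm_smul _ _ (X.add_mem _ _ hmFa hmGb), abs_of_pos (by positivity)]
    have e2 : X.nrm ((a/(a+b)) • F + (b/(a+b)) • G) ≤ K * ((a/(a+b)) * X.nrm F + (b/(a+b)) * X.nrm G) := by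
      have := X.nrm_add_le _ _ hmFa hmGb
      rwa [X.nrm_smul _ _ hmu, X.nrm_smul _ _ hmv, abs_of_pos (by positivity),
        abs_of_pos (by positivity)] at this
    have e3 : (a/(a+b)) * X.nrm F + (b/(a+b)) * X.nrm G ≤ 1 := by
      have : (a/(a+b)) * X.nrm F + (b/(a+b)) * X.nrm G ≤ (a/(a+b)) * 1 + (b/(a+b)) * 1 := by
        apply add_le_add <;> apply mul_le_mul_of_nonneg_left (by assumption) (by positivity)
      calc (a/(a+b)) * X.nrm F + (b/(a+b)) * X.nrm G ≤ (a/(a+b)) * 1 + (b/(a+b)) * 1 := this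
        _ = 1 := by field_simp
    calc X.nrm W = K⁻¹ * X.nrm ((a/(a+b)) • F + (b/(a+b)) • G) := e1
      _ ≤ K⁻¹ * (K * 1) := by
          apply mul_le_mul_of_nonneg_left _ (by positivity)
          exact e2.trans (by apply mul_le_mul_of_nonneg_left e3 hK.le)
      _ = 1 := by field_simp
  exact h1.trans h2

lemma memOrlicz_of_isLux {X : QNFS μ K} {u : α → ℝ} {k : ℝ} (h : isLux Φ X u k) :
    memOrlicz Φ X u := ⟨k, h.1, h.2.1⟩

lemma memOrlicz_neg {X : QNFS μ K} {u : α → ℝ} (hu : memOrlicz Φ X u) :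
    memOrlicz Φ X (-u) := by
  obtain ⟨c, hc, hm⟩ := hu
  refine ⟨c, hc, ?_⟩
  have e : (fun x => Φ (|(-u) x| / c)) = fun x => Φ (|u x| / c) := by
    funext x; rw [Pi.neg_apply, abs_neg]
  rwa [e]

lemma isLux_neg {X : QNFS μ K} {u : α → ℝ} {k : ℝ} (h : isLux Φ X u k) :
    isLux Φ X (-u) k := by
  obtain ⟨hk, hm, hn⟩ := h
  have e : (fun x => Φ (|(-u) x| / k)) = fun x => Φ (|u x| / k) := by
    funext x; rw [Pi.neg_apply, abs_neg]
  exact ⟨hk, by rwa [e], by rwa [e]⟩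

lemma memOrlicz_add {X : QNFS μ K} {u v : α → ℝ}
    (hu : memOrlicz Φ X u) (hv : memOrlicz Φ X v) : memOrlicz Φ X (u + v) := by
  obtain ⟨ku, hku⟩ := exists_isLux_of_memOrlicz hΦ hu
  obtain ⟨kv, hkv⟩ := exists_isLux_of_memOrlicz hΦ hv
  exact memOrlicz_of_isLux hΦ (isLux_add hΦ hku hkv)

lemma memOrlicz_sub {X : QNFS μ K} {u v : α → ℝ}
    (hu : memOrlicz Φ X u) (hv : memOrlicz Φ X v) : memOrlicz Φ X (u - v) := by
  rw [sub_eq_add_neg]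
  exact memOrlicz_add hΦ hu (memOrlicz_neg hΦ hv)

end Aux2

section Aux3
variable {μ : Measure α} {K : ℝ} (X : QNFS μ K)

/-- The norm-limit of a.e.-nonnegative functions is a.e. nonnegative. -/
lemma limit_nonneg (q : α → ℝ) (p : ℕ → α → ℝ) (hq : X.mem q) (hp : ∀ m, X.mem (p m))
    (hp0 : ∀ m x, 0 ≤ p m x)
    (h : Tendsto (fun m => X.nrm (q - p m)) atTop (nhds 0)) : ∀ᵐ x ∂μ, 0 ≤ q x := by
  set r : α → ℝ := fun x => max (-(q x)) 0 with hr
  have hrle : ∀ m x, |r x| ≤ |(q - p m) x| := by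
    intro m x
    rw [hr]
    simp only [Pi.sub_apply]
    rcases le_or_gt 0 (q x) with h1 | h1
    · rw [abs_of_nonneg (le_max_right _ _), max_eq_right (by linarith)]
      exact abs_nonneg _
    · rw [abs_of_nonneg (le_max_right _ _), max_eq_left (by linarith)]
      have : -(q x) ≤ p m x - q x := by have := hp0 m x; linarith
      exact this.trans (by rw [abs_sub_comm]; exact le_abs_self _)
  have hmemr : X.mem r := X.ideal_mem _ _ (X.mem_sub hq (hp 0)) (ae_of_all _ (hrle 0))
  have hnrm : ∀ m, X.nrm r ≤ X.nrm (q - p m) := fun m =>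
    X.ideal_nrm _ _ hmemr (X.mem_sub hq (hp m)) (ae_of_all _ (hrle m))
  have h0 : X.nrm r = 0 := le_antisymm (ge_of_tendsto h (Eventually.of_forall hnrm)) (X.nrm_nonneg _)
  have := (X.nrm_eq_zero _ hmemr).mp h0
  filter_upwards [this] with x hx
  have : max (-(q x)) 0 = 0 := hx
  have : -(q x) ≤ 0 := by
    by_contra hc
    push_neg at hc
    rw [max_eq_left hc.le] at this
    linarith
  linarith

lemma mem_partial (u : ℕ → α → ℝ) (hm : ∀ i, X.mem (u i)) :
    ∀ (M m : ℕ), X.mem (fun x => ∑ i ∈ Finset.range M, u (m+i) x) := by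
  intro M
  induction M with
  | zero =>
    intro m
    have e : (fun x => ∑ i ∈ Finset.range 0, u (m+i) x) = (0 : α → ℝ) := by funext x; simp
    rw [e]; exact X.mem_zero
  | succ M ih =>
    intro m
    have e : (fun x => ∑ i ∈ Finset.range (M+1), u (m+i) x)
        = (fun x => ∑ i ∈ Finset.range M, u (m+i) x) + u (m+M) := by
      funext x; simp [Finset.sum_range_succ]
    rw [e]
    exact X.add_mem _ _ (ih m) (hm _)

lemma nrm_partial (u : ℕ → α → ℝ) (hm : ∀ i, X.mem (u i)) {c : ℝ} (hc : 0 ≤ c)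
    (hb : ∀ i, X.nrm (u i) ≤ c * ((2*K)⁻¹)^i) :
    ∀ (M m : ℕ), X.nrm (fun x => ∑ i ∈ Finset.range M, u (m+i) x) ≤ 2*K*c*((2*K)⁻¹)^m := by
  have hK : (0:ℝ) < K := X.K_pos
  intro M
  induction M with
  | zero =>
    intro m
    have e : (fun x => ∑ i ∈ Finset.range 0, u (m+i) x) = (0 : α → ℝ) := by funext x; simp
    rw [e, X.nrm_zero]
    positivity
  | succ M ih =>
    intro m
    have e : (fun x => ∑ i ∈ Finset.range (M+1), u (m+i) x)
        = u m + (fun x => ∑ i ∈ Finset.range M, u (m+1+i) x) := by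
      funext x
      rw [Pi.add_apply, Finset.sum_range_succ' (fun i => u (m+i) x) M]
      have e1 : (∑ i ∈ Finset.range M, u (m+(i+1)) x) = ∑ i ∈ Finset.range M, u (m+1+i) x :=
        Finset.sum_congr rfl fun i _ => by rw [show m+(i+1) = m+1+i from by omega]
      rw [e1]
      simp only [Nat.add_zero]
      exact add_comm _ _
    rw [e]
    have h1 := X.nrm_add_le _ _ (hm m) (mem_partial X u hm M (m+1))
    have h2 := ih (m+1)
    have h3 := hb m
    have key : K * (c * ((2*K)⁻¹)^m + 2*K*c*((2*K)⁻¹)^(m+1)) = 2*K*c*((2*K)⁻¹)^m := by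
      have h2K : (2*K) ≠ 0 := by positivity
      field_simp
      linear_combination (c * K⁻¹ ^ m * (1 / 2) ^ m) * (mul_inv_cancel₀ hK.ne' : K * K⁻¹ = 1)
    calc X.nrm _ ≤ K * (X.nrm (u m) + X.nrm (fun x => ∑ i ∈ Finset.range M, u (m+1+i) x)) := h1
      _ ≤ K * (c * ((2*K)⁻¹)^m + 2*K*c*((2*K)⁻¹)^(m+1)) := by
          apply mul_le_mul_of_nonneg_left (add_le_add h3 h2) hK.le
      _ = 2*K*c*((2*K)⁻¹)^m := key

/-- Convergent series construction in `X`, with a.e. domination of partial sums. -/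
lemma series (hX : CompleteWrt X.mem X.nrm) (u : ℕ → α → ℝ) (hm : ∀ i, X.mem (u i))
    (h0 : ∀ i x, 0 ≤ u i x) {c : ℝ} (hc : 0 ≤ c)
    (hb : ∀ i, X.nrm (u i) ≤ c * ((2*K)⁻¹)^i) :
    ∃ U, X.mem U ∧ X.nrm U ≤ 2*K^2*c ∧
      ∀ m, ∀ᵐ x ∂μ, ∑ i ∈ Finset.range m, u i x ≤ U x := by
  have hK : (0:ℝ) < K := X.K_pos
  have hθ : (2*K)⁻¹ < 1 := by
    have hK1 := X.one_le_K
    have h2 : (1:ℝ) < 2*K := by linarith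
    exact inv_lt_one_of_one_lt₀ h2
  have hθ0 : (0:ℝ) < (2*K)⁻¹ := by positivity
  set P : ℕ → α → ℝ := fun m x => ∑ i ∈ Finset.range m, u i x with hP
  have hPm : ∀ m, X.mem (P m) := by
    intro m
    have h1 := mem_partial X u hm m 0
    have e : (fun x => ∑ i ∈ Finset.range m, u (0+i) x) = P m := by
      funext x; simp [hP]
    rwa [e] at h1
  have hPdiff : ∀ m n, n ≤ m → P m - P n = fun x => ∑ i ∈ Finset.range (m-n), u (n+i) x := by
    intro m n hnm
    funext x
    rw [Pi.sub_apply, hP]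
    simp only
    rw [show m = n + (m-n) by omega, Finset.sum_range_add]
    simp
  have hPnrm : ∀ m n, n ≤ m → X.nrm (P m - P n) ≤ 2*K*c*((2*K)⁻¹)^n := by
    intro m n hnm
    rw [hPdiff m n hnm]
    exact nrm_partial X u hm hc hb (m-n) n
  have hcauchy : ∀ ε : ℝ, 0 < ε → ∃ n₀, ∀ m ≥ n₀, ∀ n ≥ n₀, X.nrm (P m - P n) < ε := by
    intro ε hε
    obtain ⟨n₀, hn₀⟩ := (tendsto_pow_atTop_nhds_zero_of_lt_one hθ0.le hθ).eventually
      (eventually_lt_nhds (show (0:ℝ) < ε / (2*K*c+1) by positivity)) |>.exists_forall_of_atTop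
    refine ⟨n₀, fun m hm' n hn' => ?_⟩
    have key : ∀ m n, n ≤ m → n₀ ≤ n → X.nrm (P m - P n) < ε := by
      intro m n hnm hn
      have h1 := hPnrm m n hnm
      have h2 := hn₀ n hn
      have : 2*K*c*((2*K)⁻¹)^n < ε := by
        have h3 : 2*K*c*((2*K)⁻¹)^n ≤ (2*K*c+1) * ((2*K)⁻¹)^n := by
          apply mul_le_mul_of_nonneg_right (by linarith) (by positivity)
        have h4 : (2*K*c+1) * ((2*K)⁻¹)^n < (2*K*c+1) * (ε / (2*K*c+1)) := by
          apply mul_lt_mul_of_pos_left h2 (by positivity)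
        have h5 : (2*K*c+1) * (ε / (2*K*c+1)) = ε := by field_simp
        linarith
      linarith
    rcases le_total n m with h | h
    · exact key m n h hn'
    · rw [X.nrm_sub_comm (hPm m) (hPm n)]
      exact key n m h hm'
  obtain ⟨U, hUmem, hUlim⟩ := hX P hPm hcauchy
  have hUlim' : Tendsto (fun m => X.nrm (U - P m)) atTop (nhds 0) := by
    have e : ∀ m, X.nrm (U - P m) = X.nrm (P m - U) := fun m =>
      X.nrm_sub_comm hUmem (hPm m)
    simpa [e] using hUlim
  refine ⟨U, hUmem, ?_, ?_⟩
  · -- norm bound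
    have hbound : ∀ m, X.nrm U ≤ K * (X.nrm (U - P m) + 2*K*c) := by
      intro m
      have e : U = (U - P m) + P m := by abel
      have h1 := X.nrm_add_le _ _ (X.mem_sub hUmem (hPm m)) (hPm m)
      rw [← e] at h1
      have h2 : X.nrm (P m) ≤ 2*K*c := by
        have := nrm_partial X u hm hc hb m 0
        have e2 : (fun x => ∑ i ∈ Finset.range m, u (0+i) x) = P m := by
          funext x; simp [hP]
        rw [e2] at this
        simpa using this
      calc X.nrm U ≤ K * (X.nrm (U - P m) + X.nrm (P m)) := h1
        _ ≤ K * (X.nrm (U - P m) + 2*K*c) := by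
            apply mul_le_mul_of_nonneg_left (by linarith) hK.le
    have hlim2 : Tendsto (fun m => K * (X.nrm (U - P m) + 2*K*c)) atTop (nhds (K * (0 + 2*K*c))) := by
      exact (hUlim'.add_const _).const_mul K
    have := ge_of_tendsto hlim2 (Eventually.of_forall hbound)
    calc X.nrm U ≤ K * (0 + 2*K*c) := this
      _ = 2*K^2*c := by ring
  · -- a.e. domination
    intro m
    have happ := limit_nonneg X (U - P m) (fun m' => P (m + m') - P m)
      (X.mem_sub hUmem (hPm m)) (fun m' => X.mem_sub (hPm _) (hPm m)) ?_ ?_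
    · filter_upwards [happ] with x hx
      have : P m x ≤ U x := by
        have := hx
        simp only [Pi.sub_apply] at this
        linarith
      simpa [hP] using this
    · intro m' x
      show 0 ≤ (P (m + m') - P m) x
      rw [hPdiff (m+m') m (by omega)]
      exact Finset.sum_nonneg fun i _ => h0 _ _
    · have e : ∀ m', (U - P m) - (P (m + m') - P m) = U - P (m+m') := by
        intro m'; abel
      have : (fun m' => X.nrm ((U - P m) - (P (m + m') - P m)))
          = fun m' => X.nrm (U - P (m+m')) := by
        funext m'; rw [e m']
      rw [this]
      have e2 : (fun m' => X.nrm (U - P (m+m')))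
          = (fun n => X.nrm (U - P n)) ∘ (fun m' => m' + m) := by
        funext m'
        simp only [Function.comp_apply]
        rw [Nat.add_comm]
      rw [e2]
      exact hUlim'.comp (tendsto_add_atTop_nat m)
end Aux3

set_option maxHeartbeats 1000000 in
/-- If `X` is a quasi-Banach function space, then the Orlicz space `X^Φ` with
the Luxemburg quasi-norm is complete (no σ-Fatou property assumed). -/
theorem stmt_14 {μ : Measure α} [IsFiniteMeasure μ] {K : ℝ}
    (Φ : ℝ → ℝ) (hΦ : IsYoung Φ) (X : QNFS μ K)
    (hX : CompleteWrt X.mem X.nrm) :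
    CompleteWrt (memOrlicz Φ X) (lux Φ X) := by
  intro f hmem hC
  have hK : (0:ℝ) < K := X.K_pos
  have hK1 : (1:ℝ) ≤ K := X.one_le_K
  set θ : ℝ := (2*K)⁻¹ with hθdef
  have hθ0 : 0 < θ := by positivity
  have hθhalf : θ ≤ 2⁻¹ := by
    rw [hθdef]
    exact inv_anti₀ (by norm_num) (by linarith)
  have hθ1 : θ ≤ 1 := hθhalf.trans (by norm_num)
  have hcube1 : θ^3 ≤ θ := by nlinarith [hθ0.le, hθ1, sq_nonneg θ]
  have hcube2 : 2*θ^3 ≤ 1 := by nlinarith [hθ0.le, hθhalf, sq_nonneg θ]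
  have hcube4 : θ^3*4 ≤ θ := by nlinarith [hθ0.le, hθhalf, sq_nonneg θ]
  set ε : ℕ → ℝ := fun j => θ^(3*j+4) with hεdef
  have hε0 : ∀ j, 0 < ε j := fun j => by positivity
  -- choose Cauchy thresholds and a rapidly Cauchy subsequence
  choose N hN using fun j => hC (ε j) (hε0 j)
  set n : ℕ → ℕ := fun j => Nat.rec (N 0) (fun j nj => max (nj + 1) (N (j+1))) j with hn
  have hn_succ : ∀ j, n (j+1) = max (n j + 1) (N (j+1)) := fun j => rfl
  have hnN : ∀ j, N j ≤ n j := by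
    intro j
    cases j with
    | zero => exact le_rfl
    | succ j => rw [hn_succ]; exact le_max_right _ _
  have hstrict : StrictMono n := strictMono_nat_of_lt_succ fun j => by
    rw [hn_succ]; exact lt_of_lt_of_le (Nat.lt_succ_self _) (le_max_left _ _)
  have hnj : ∀ j, j ≤ n j := fun j => hstrict.le_apply
  clear_value n
  set h : ℕ → α → ℝ := fun j => f (n (j+1)) - f (n j) with hh
  have hmemd : ∀ j, memOrlicz Φ X (h j) := by
    intro j
    simp only [hh]
    exact memOrlicz_sub hΦ (hmem _) (hmem _)
  have hlux_lt : ∀ j, lux Φ X (h j) < ε j := by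
    intro j
    simp only [hh]
    exact hN j (n (j+1)) ((hnN j).trans (hstrict.monotone (Nat.le_succ j))) (n j) (hnN j)
  clear_value h
  have haex : ∀ j, ∃ a, isLux Φ X (h j) a ∧ a < ε j := fun j =>
    exists_isLux_lt (exists_isLux_of_memOrlicz hΦ (hmemd j)) (hlux_lt j)
  choose a ha haε using haex
  have ha_pos : ∀ j, 0 < a j := fun j => (ha j).1
  -- scaling helper
  have hscale : ∀ (j : ℕ) (k : ℝ), a j ≤ k →
      X.mem (fun x => Φ (|h j x| / k)) ∧ X.nrm (fun x => Φ (|h j x| / k)) ≤ a j / k := by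
    intro j k hk
    obtain ⟨hm', hn'⟩ := lux_scale hΦ (h j) (ha_pos j) hk (ha j).2.1
    refine ⟨hm', hn'.trans ?_⟩
    have hk0 : 0 < k := lt_of_lt_of_le (ha_pos j) hk
    have h2 : 0 ≤ a j / k := div_nonneg (ha_pos j).le hk0.le
    exact mul_le_of_le_one_right h2 (ha j).2.2
  -- ε bounds
  have hεa4 : ∀ j, ε j ≤ ((4:ℝ)⁻¹)^j := by
    intro j
    have s1 : ε j ≤ θ^(3*j) := pow_le_pow_of_le_one hθ0.le hθ1 (by omega)
    have s2 : θ^(3*j) ≤ ((2:ℝ)⁻¹)^(3*j) := pow_le_pow_left₀ hθ0.le hθhalf _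
    have s3 : ((2:ℝ)⁻¹)^(3*j) = ((8:ℝ)⁻¹)^j := by
      rw [pow_mul]; norm_num
    have s4 : ((8:ℝ)⁻¹)^j ≤ ((4:ℝ)⁻¹)^j := pow_le_pow_left₀ (by norm_num) (by norm_num) _
    calc ε j ≤ θ^(3*j) := s1
      _ ≤ ((2:ℝ)⁻¹)^(3*j) := s2
      _ = ((8:ℝ)⁻¹)^j := s3
      _ ≤ ((4:ℝ)⁻¹)^j := s4
  have hεa2 : ∀ t, ε t ≤ ((2:ℝ)⁻¹)^(t+1) := by
    intro t
    have s1 : ε t ≤ ((2:ℝ)⁻¹)^(3*t+4) := pow_le_pow_left₀ hθ0.le hθhalf _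
    have s2 : ((2:ℝ)⁻¹)^(3*t+4) ≤ ((2:ℝ)⁻¹)^(t+1) :=
      pow_le_pow_of_le_one (by norm_num) (by norm_num) (by omega)
    exact s1.trans s2
  -- Step 1: a.e. absolute summability of the increments
  have hmem1 : ∀ j, X.mem (fun x => Φ (|h j x| / ((4:ℝ)⁻¹)^j)) := fun j =>
    (hscale j _ ((haε j).le.trans (hεa4 j))).1
  have h01 : ∀ (j : ℕ) (x : α), 0 ≤ Φ (|h j x| / ((4:ℝ)⁻¹)^j) := fun j x =>
    hΦ.nonneg (by positivity)
  have hb1 : ∀ j, X.nrm (fun x => Φ (|h j x| / ((4:ℝ)⁻¹)^j)) ≤ 1 * θ^j := by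
    intro j
    have s1 := (hscale j _ ((haε j).le.trans (hεa4 j))).2
    have e1 : a j / ((4:ℝ)⁻¹)^j = a j * 4^j := by
      rw [inv_pow, div_eq_mul_inv, inv_inv]
    have s2 : a j * 4^j ≤ ε j * 4^j :=
      mul_le_mul_of_nonneg_right (haε j).le (by positivity)
    have e2 : ε j * 4^j = θ^4 * (θ^3*4)^j := by
      simp only [hεdef]
      rw [mul_pow, pow_add, pow_mul]
      ring
    have s3 : θ^4 * (θ^3*4)^j ≤ 1 * θ^j :=
      mul_le_mul (pow_le_one₀ hθ0.le hθ1)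
        (pow_le_pow_left₀ (by positivity) hcube4 j) (by positivity) zero_le_one
    calc X.nrm _ ≤ a j / ((4:ℝ)⁻¹)^j := s1
      _ = a j * 4^j := e1
      _ ≤ ε j * 4^j := s2
      _ = θ^4 * (θ^3*4)^j := e2
      _ ≤ 1 * θ^j := s3
  obtain ⟨U, hUmem, hUnrm, hUdom⟩ := series X hX _ hmem1 h01 zero_le_one hb1
  have hsummable : ∀ᵐ x ∂μ, Summable (fun j => |h j x|) := by
    filter_upwards [ae_all_iff.mpr hUdom] with x hx
    have hterm : ∀ j, Φ (|h j x| / ((4:ℝ)⁻¹)^j) ≤ U x := by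
      intro j
      refine le_trans ?_ (hx (j+1))
      exact Finset.single_le_sum (f := fun i => Φ (|h i x| / ((4:ℝ)⁻¹)^i))
        (fun i _ => h01 i x) (Finset.self_mem_range_succ j)
    obtain ⟨T, hT⟩ := (hΦ.tendsto_atTop.eventually (eventually_gt_atTop (U x))).exists_forall_of_atTop
    have hbnd : ∀ j, |h j x| ≤ (max T 0) * ((4:ℝ)⁻¹)^j := by
      intro j
      have hp : (0:ℝ) < ((4:ℝ)⁻¹)^j := by positivity
      rw [← div_le_iff₀ hp]
      by_contra hcon
      push_neg at hcon
      have h1 : T ≤ |h j x| / ((4:ℝ)⁻¹)^j := le_trans (le_max_left T 0) hcon.le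
      exact absurd (hterm j) (not_le.mpr (hT _ h1))
    apply Summable.of_nonneg_of_le (fun j => abs_nonneg _) hbnd
    exact (summable_geometric_of_lt_one (by norm_num) (by norm_num)).mul_left _
  -- the candidate limit
  set g : α → ℝ := fun x => f (n 0) x + ∑' j, h j x with hg
  have htel : ∀ (j : ℕ) (x : α), f (n j) x = f (n 0) x + ∑ i ∈ Finset.range j, h i x := by
    intro j x
    have e1 : ∑ i ∈ Finset.range j, h i x
        = ∑ i ∈ Finset.range j, ((fun i => f (n i) x) (i+1) - (fun i => f (n i) x) i) := by
      apply Finset.sum_congr rfl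
      intro i _
      simp [hh]
    rw [e1, Finset.sum_range_sub (fun i => f (n i) x) j]
    ring
  have hgx : ∀ x, g x = f (n 0) x + ∑' j, h j x := fun x => by rw [hg]
  clear_value g
  -- Step 2: the tails are small in Luxemburg constant 2⁻ʲ
  have hlast : ∀ j, isLux Φ X (f (n j) - g) (((2:ℝ)⁻¹)^j) := by
    intro j
    -- the dominating series
    set w : ℕ → α → ℝ := fun t x => Φ (|h t x| / ((2:ℝ)⁻¹)^(t+1)) with hw
    have hwmem : ∀ t, X.mem (w t) := fun t =>
      (hscale t _ ((haε t).le.trans (hεa2 t))).1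
    have hwnrm : ∀ t, X.nrm (w t) ≤ ε t * 2^(t+1) := by
      intro t
      have s1 := (hscale t _ ((haε t).le.trans (hεa2 t))).2
      have e1 : a t / ((2:ℝ)⁻¹)^(t+1) = a t * 2^(t+1) := by
        rw [inv_pow, div_eq_mul_inv, inv_inv]
      have s2 : a t * 2^(t+1) ≤ ε t * 2^(t+1) :=
        mul_le_mul_of_nonneg_right (haε t).le (by positivity)
      calc X.nrm _ ≤ a t / ((2:ℝ)⁻¹)^(t+1) := s1
        _ = a t * 2^(t+1) := e1
        _ ≤ ε t * 2^(t+1) := s2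
    set v : ℕ → α → ℝ := fun i => ((2:ℝ)⁻¹)^(i+1) • w (i+j) with hv
    have hvx : ∀ i x, v i x = ((2:ℝ)⁻¹)^(i+1) * Φ (|h (i+j) x| / ((2:ℝ)⁻¹)^(i+j+1)) := by
      intro i x
      simp [hv, hw, smul_eq_mul]
    have hvmem : ∀ i, X.mem (v i) := fun i => X.smul_mem _ _ (hwmem (i+j))
    have hv0 : ∀ (i : ℕ) (x : α), 0 ≤ v i x := by
      intro i x
      rw [hvx i x]
      have : 0 ≤ Φ (|h (i+j) x| / ((2:ℝ)⁻¹)^(i+j+1)) := hΦ.nonneg (by positivity)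
      positivity
    have hvnrm : ∀ i, X.nrm (v i) ≤ θ^4 * θ^i := by
      intro i
      have e1 : X.nrm (v i) = ((2:ℝ)⁻¹)^(i+1) * X.nrm (w (i+j)) := by
        rw [hv]
        simp only
        rw [X.nrm_smul _ _ (hwmem (i+j)), abs_of_pos (by positivity)]
      have s1 : ((2:ℝ)⁻¹)^(i+1) * X.nrm (w (i+j)) ≤ ((2:ℝ)⁻¹)^(i+1) * (ε (i+j) * 2^(i+j+1)) :=
        mul_le_mul_of_nonneg_left (hwnrm (i+j)) (by positivity)
      have hc : ((2:ℝ)^(i+1))⁻¹ * 2^(i+1) = 1 := inv_mul_cancel₀ (by positivity)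
      have e2 : ((2:ℝ)⁻¹)^(i+1) * (ε (i+j) * 2^(i+j+1)) = 2^j * ε (i+j) := by
        calc ((2:ℝ)⁻¹)^(i+1) * (ε (i+j) * 2^(i+j+1))
            = (2^j * ε (i+j)) * (((2:ℝ)^(i+1))⁻¹ * 2^(i+1)) := by
              rw [show i+j+1 = (i+1)+j from by omega, pow_add, inv_pow]
              ring
          _ = 2^j * ε (i+j) := by rw [hc]; ring
      have e3 : (2:ℝ)^j * ε (i+j) = θ^4 * ((θ^3)^i * ((θ^3)^j * 2^j)) := by
        simp only [hεdef]
        rw [show 3*(i+j)+4 = 3*i + (3*j + 4) from by ring, pow_add, pow_add, pow_mul, pow_mul]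
        ring
      have b1 : (θ^3)^i ≤ θ^i := pow_le_pow_left₀ (by positivity) hcube1 i
      have b2 : (θ^3)^j * 2^j ≤ 1 := by
        rw [← mul_pow]
        exact pow_le_one₀ (by positivity) (by nlinarith [hcube2])
      have b3 : (θ^3)^i * ((θ^3)^j * 2^j) ≤ θ^i * 1 :=
        mul_le_mul b1 b2 (by positivity) (by positivity)
      calc X.nrm (v i) = ((2:ℝ)⁻¹)^(i+1) * X.nrm (w (i+j)) := e1
        _ ≤ ((2:ℝ)⁻¹)^(i+1) * (ε (i+j) * 2^(i+j+1)) := s1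
        _ = 2^j * ε (i+j) := e2
        _ = θ^4 * ((θ^3)^i * ((θ^3)^j * 2^j)) := e3
        _ ≤ θ^4 * (θ^i * 1) := mul_le_mul_of_nonneg_left b3 (by positivity)
        _ = θ^4 * θ^i := by ring
    clear_value v w
    obtain ⟨D, hDmem, hDnrm, hDdom⟩ := series X hX v hvmem hv0 (by positivity) hvnrm
    have hDnrm1 : X.nrm D ≤ 1 := by
      refine hDnrm.trans ?_
      rw [hθdef]
      have e : 2*K^2*((2*K)⁻¹)^4 = (8*K^2)⁻¹ := by
        field_simp
        ring
      rw [e]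
      have h8 : (1:ℝ) ≤ 8*K^2 := by nlinarith
      rw [inv_le_one_iff₀]
      right
      exact h8
    -- pointwise a.e. estimate
    have hae : ∀ᵐ x ∂μ, |Φ (|(f (n j) - g) x| / ((2:ℝ)⁻¹)^j)| ≤ |D x| := by
      filter_upwards [hsummable, ae_all_iff.mpr hDdom] with x hsx hDx
      have hsum_h : Summable (fun i => h i x) := hsx.of_abs
      have hsumtail : Summable (fun i => |h (i+j) x|) := (summable_nat_add_iff j).mpr hsx
      have hS0 : 0 ≤ ∑' i, |h (i+j) x| := tsum_nonneg (fun i => abs_nonneg _)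
      -- partial sum estimate
      have hpartial : ∀ m, Φ ((∑ i ∈ Finset.range m, |h (i+j) x|) * 2^j) ≤ D x := by
        intro m
        have hys := hΦ.young_sum m (fun i => |h (i+j) x| * 2^j) (fun i => by positivity)
        have e1 : ∑ i ∈ Finset.range m, |h (i+j) x| * 2^j
            = (∑ i ∈ Finset.range m, |h (i+j) x|) * 2^j := by
          rw [Finset.sum_mul]
        have e2 : ∀ i, (2:ℝ)⁻¹^(i+1) * Φ ((2:ℝ)^(i+1) * (|h (i+j) x| * 2^j)) = v i x := by
          intro i
          have e3 : (2:ℝ)^(i+1) * (|h (i+j) x| * 2^j) = |h (i+j) x| / ((2:ℝ)⁻¹)^(i+j+1) := by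
            rw [inv_pow, div_eq_mul_inv, inv_inv]
            ring
          rw [e3, hvx i x]
        rw [e1] at hys
        calc Φ ((∑ i ∈ Finset.range m, |h (i+j) x|) * 2^j)
            ≤ ∑ i ∈ Finset.range m, (2:ℝ)⁻¹^(i+1) * Φ ((2:ℝ)^(i+1) * (|h (i+j) x| * 2^j)) := hys
          _ = ∑ i ∈ Finset.range m, v i x := Finset.sum_congr rfl fun i _ => e2 i
          _ ≤ D x := hDx m
      -- pass to the limit
      have hconv : Tendsto (fun m => (∑ i ∈ Finset.range m, |h (i+j) x|) * 2^j)
          atTop (nhds ((∑' i, |h (i+j) x|) * 2^j)) := (hsumtail.hasSum.tendsto_sum_nat).mul_const _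
      have hconv' : Tendsto (fun m => (∑ i ∈ Finset.range m, |h (i+j) x|) * 2^j)
          atTop (nhdsWithin ((∑' i, |h (i+j) x|) * 2^j) (Set.Ici 0)) := by
        apply tendsto_nhdsWithin_iff.mpr
        refine ⟨hconv, Eventually.of_forall fun m => ?_⟩
        have : 0 ≤ ∑ i ∈ Finset.range m, |h (i+j) x| :=
          Finset.sum_nonneg fun i _ => abs_nonneg _
        exact Set.mem_Ici.mpr (by positivity)
      have hcont : Tendsto Φ (nhdsWithin ((∑' i, |h (i+j) x|) * 2^j) (Set.Ici 0))
          (nhds (Φ ((∑' i, |h (i+j) x|) * 2^j))) :=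
        (hΦ.continuous _ (Set.mem_Ici.mpr (by positivity))).tendsto
      have hΦS : Φ ((∑' i, |h (i+j) x|) * 2^j) ≤ D x :=
        le_of_tendsto (hcont.comp hconv') (Eventually.of_forall hpartial)
      -- tail identity
      have htail : (f (n j) - g) x = -(∑' i, h (i+j) x) := by
        have e1 := Summable.sum_add_tsum_nat_add (f := fun i => h i x) j hsum_h
        have e2 := htel j x
        have e3 := hgx x
        simp only [Pi.sub_apply]
        rw [e3, e2]
        linarith [e1]
      have habs : |(f (n j) - g) x| ≤ ∑' i, |h (i+j) x| := by
        rw [htail, abs_neg]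
        have h1 : Summable fun i => ‖h (i+j) x‖ := by
          simpa [Real.norm_eq_abs] using hsumtail
        have := norm_tsum_le_tsum_norm h1
        simpa [Real.norm_eq_abs] using this
      -- conclude
      have hd : |(f (n j) - g) x| / ((2:ℝ)⁻¹)^j ≤ (∑' i, |h (i+j) x|) * 2^j := by
        have e : (∑' i, |h (i+j) x|) / ((2:ℝ)⁻¹)^j = (∑' i, |h (i+j) x|) * 2^j := by
          rw [inv_pow, div_eq_mul_inv, inv_inv]
        rw [← e]
        gcongr
      have hfinal : Φ (|(f (n j) - g) x| / ((2:ℝ)⁻¹)^j) ≤ D x :=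
        (hΦ.mono (by positivity) hd).trans hΦS
      rw [abs_of_nonneg (hΦ.nonneg (by positivity))]
      exact hfinal.trans (le_abs_self _)
    exact ⟨by positivity, X.ideal_mem _ _ hDmem hae,
      (X.ideal_nrm _ _ (X.ideal_mem _ _ hDmem hae) hDmem hae).trans hDnrm1⟩
  -- conclusion
  have hgOrlicz : memOrlicz Φ X g := by
    have h1 : memOrlicz Φ X (f (n 0) - g) := memOrlicz_of_isLux hΦ (hlast 0)
    have h2 := memOrlicz_sub hΦ (hmem (n 0)) h1
    rwa [sub_sub_cancel] at h2
  refine ⟨g, hgOrlicz, ?_⟩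
  rw [Metric.tendsto_atTop]
  intro δ hδ
  have hδ'0 : 0 < δ / (4*K) := by positivity
  obtain ⟨n₀, hn₀⟩ := hC (δ / (4*K)) hδ'0
  obtain ⟨j₁, hj₁⟩ := ((tendsto_pow_atTop_nhds_zero_of_lt_one (by norm_num : (0:ℝ) ≤ 2⁻¹)
    (by norm_num)).eventually (eventually_lt_nhds hδ'0)).exists_forall_of_atTop
  set j : ℕ := max n₀ j₁ with hj
  have hjn₀ : n₀ ≤ j := le_max_left _ _
  have hpow : ((2:ℝ)⁻¹)^j < δ / (4*K) := hj₁ j (le_max_right _ _)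
  refine ⟨n j, fun m hm => ?_⟩
  have hm₀ : n₀ ≤ m := le_trans (le_trans hjn₀ (hnj j)) hm
  have hjm₀ : n₀ ≤ n j := le_trans hjn₀ (hnj j)
  have hlt : lux Φ X (f m - f (n j)) < δ / (4*K) := hn₀ m hm₀ (n j) hjm₀
  obtain ⟨b, hb', hbδ⟩ := exists_isLux_lt
    (exists_isLux_of_memOrlicz hΦ (memOrlicz_sub hΦ (hmem m) (hmem (n j)))) hlt
  have hcomb := isLux_add hΦ hb' (hlast j)
  rw [sub_add_sub_cancel] at hcomb
  have hle : lux Φ X (f m - g) ≤ K * (b + ((2:ℝ)⁻¹)^j) := lux_le_of_isLux hcomb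
  have hlt2 : K * (b + ((2:ℝ)⁻¹)^j) < K * (δ / (4*K) + δ / (4*K)) := by
    apply mul_lt_mul_of_pos_left _ hK
    exact add_lt_add hbδ hpow
  have heq : K * (δ / (4*K) + δ / (4*K)) = δ/2 := by
    field_simp
    ring
  rw [Real.dist_eq, sub_zero, abs_of_nonneg (lux_nonneg X _)]
  calc lux Φ X (f m - g) ≤ K * (b + ((2:ℝ)⁻¹)^j) := hle
    _ < K * (δ / (4*K) + δ / (4*K)) := hlt2
    _ = δ/2 := heq
    _ < δ := by linarith
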